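/- Let v_1, …, v_n be vectors spanning ℂ^d, let ρ = ∑_{i=1}^{n} v_i v_iᴴ (a positive definite d×d matrix), and let G be the n×n Gram matrix with G_{ij} = ⟨v_i, v_j⟩. Then the n×n matrix M with entries M_{ij} = ⟨v_i, ρ^{−1/2} v_j⟩ is positive semidefinite and satisfies M² = G; consequently M = √G. -/

import Mathlib

open Matrix
open scoped ComplexOrder

/-- The positive semidefinite square root of a positive semidefinite matrix
(the definition `Matrix.PosSemidef.sqrt` of the older Mathlib, since removed). -/
noncomputable def Matrix.PosSemidef.sqrt {n : Type*} [Fintype n] [DecidableEq n] {𝕜 : Type*} [RCLike 𝕜]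
    {A : Matrix n n 𝕜} (hA : A.PosSemidef) : Matrix n n 𝕜 :=
  hA.1.eigenvectorUnitary.1 * diagonal ((↑) ∘ (fun x : ℝ => √x) ∘ hA.1.eigenvalues) *
    (star hA.1.eigenvectorUnitary : Matrix n n 𝕜)

section PortSqrt
open scoped MatrixOrder

lemma Matrix.PosSemidef.sqrt_eq_cfcSqrt {n : Type*} [Fintype n] [DecidableEq n] {𝕜 : Type*}
    [RCLike 𝕜] {A : Matrix n n 𝕜} (hA : A.PosSemidef) : hA.sqrt = CFC.sqrt A := by
  rw [CFC.sqrt_eq_cfc, cfc_nnreal_eq_real _ A, hA.1.cfc_eq]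
  simp only [IsHermitian.cfc, Unitary.conjStarAlgAut_apply, Matrix.PosSemidef.sqrt, Real.sqrt.eq_1]

lemma Matrix.PosSemidef.posSemidef_sqrt {n : Type*} [Fintype n] [DecidableEq n] {𝕜 : Type*}
    [RCLike 𝕜] {A : Matrix n n 𝕜} (hA : A.PosSemidef) : hA.sqrt.PosSemidef := by
  rw [hA.sqrt_eq_cfcSqrt]
  exact (CFC.sqrt_nonneg A).posSemidef

lemma Matrix.PosSemidef.sqrt_mul_self {n : Type*} [Fintype n] [DecidableEq n] {𝕜 : Type*}
    [RCLike 𝕜] {A : Matrix n n 𝕜} (hA : A.PosSemidef) : hA.sqrt * hA.sqrt = A := by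
  rw [hA.sqrt_eq_cfcSqrt]
  exact CFC.sqrt_mul_sqrt_self A hA.nonneg

lemma Matrix.PosSemidef.eq_sqrt_of_sq_eq {n : Type*} [Fintype n] [DecidableEq n] {𝕜 : Type*}
    [RCLike 𝕜] {B : Matrix n n 𝕜} (hB : B.PosSemidef) {A : Matrix n n 𝕜} (hA : A.PosSemidef)
    (h : B ^ 2 = A) : B = hA.sqrt := by
  rw [hA.sqrt_eq_cfcSqrt, ← h, CFC.sqrt_sq B hB.nonneg]

end PortSqrt

/-- A positive semidefinite matrix whose square is positive definite is positive definite. -/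
lemma sqrt_posDef_aux {d : ℕ} {ρ : Matrix (Fin d) (Fin d) ℂ} (hρ : ρ.PosDef) :
    (hρ.posSemidef.sqrt).PosDef := by
  set T := hρ.posSemidef.sqrt with hT
  have hTpsd : T.PosSemidef := hρ.posSemidef.posSemidef_sqrt
  have hTT : T * T = ρ := hρ.posSemidef.sqrt_mul_self
  refine .of_dotProduct_mulVec_pos hTpsd.1 fun x hx => ?_
  rcases lt_or_eq_of_le (hTpsd.dotProduct_mulVec_nonneg x) with h | h
  · exact h
  · exfalso
    -- xᴴ T x = 0 implies T x = 0 since T is PSD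
    set B := hTpsd.sqrt with hB
    have hBB : B * B = T := hTpsd.sqrt_mul_self
    have hBH : Bᴴ = B := hTpsd.posSemidef_sqrt.1
    have hBx : star x ⬝ᵥ T *ᵥ x = star (B *ᵥ x) ⬝ᵥ (B *ᵥ x) := by
      rw [← hBB, ← mulVec_mulVec, star_mulVec, hBH, dotProduct_mulVec]
    have hBx0 : B *ᵥ x = 0 := by
      apply dotProduct_star_self_eq_zero.mp
      rw [← hBx, ← h]
    have hTx0 : T *ᵥ x = 0 := by
      rw [← hBB, ← mulVec_mulVec, hBx0, mulVec_zero]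
    have hρx0 : ρ *ᵥ x = 0 := by
      rw [← hTT, ← mulVec_mulVec, hTx0, mulVec_zero]
    have := hρ.dotProduct_mulVec_pos hx
    rw [hρx0, dotProduct_zero] at this
    exact lt_irrefl _ this

theorem stmt_6 (n d : ℕ) (v : Fin n → (Fin d → ℂ))
    (hspan : Submodule.span ℂ (Set.range v) = ⊤)
    (ρ : Matrix (Fin d) (Fin d) ℂ)
    (hρdef : ρ = ∑ i, Matrix.vecMulVec (v i) (star (v i)))
    (hρ : ρ.PosDef)
    (G : Matrix (Fin n) (Fin n) ℂ) (hGdef : ∀ i j, G i j = star (v i) ⬝ᵥ v j)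
    (hG : G.PosSemidef)
    (M : Matrix (Fin n) (Fin n) ℂ)
    (hMdef : ∀ i j, M i j = star (v i) ⬝ᵥ ((hρ.posSemidef.sqrt)⁻¹ *ᵥ v j)) :
    M.PosSemidef ∧ M * M = G ∧ M = hG.sqrt := by
  set T := hρ.posSemidef.sqrt with hT
  have hTpd : T.PosDef := sqrt_posDef_aux hρ
  have hTT : T * T = ρ := hρ.posSemidef.sqrt_mul_self
  set S := T⁻¹ with hS
  have hSpd : S.PosDef := hTpd.inv
  -- the matrix of column vectors
  set V : Matrix (Fin d) (Fin n) ℂ := Matrix.of fun k i => v i k with hV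
  have hVHV : Vᴴ * V = G := by
    ext i j
    simp only [hGdef, Matrix.mul_apply, dotProduct, conjTranspose_apply, hV, of_apply,
      Pi.star_apply, RCLike.star_def]
  have hVVH : V * Vᴴ = ρ := by
    ext k l
    simp only [hρdef, Matrix.sum_apply, Matrix.mul_apply, vecMulVec_apply, hV,
      conjTranspose_apply, of_apply, Pi.star_apply, RCLike.star_def]
  have hM : M = Vᴴ * (S * V) := by
    ext i j
    simp only [hMdef, Matrix.mul_apply, mulVec, dotProduct, Finset.sum_mul, hV,
      conjTranspose_apply, of_apply, Pi.star_apply, RCLike.star_def, ← hS]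
  have hSρS : S * ρ * S = 1 := by
    rw [← hTT, hS, ← Matrix.mul_assoc, Matrix.mul_assoc _ T T⁻¹,
      Matrix.mul_nonsing_inv _ ((Matrix.isUnit_iff_isUnit_det T).mp hTpd.isUnit), Matrix.mul_one,
      Matrix.nonsing_inv_mul _ ((Matrix.isUnit_iff_isUnit_det T).mp hTpd.isUnit)]
  have hMpsd : M.PosSemidef := by
    rw [hM]
    set R := hSpd.posSemidef.sqrt with hR
    have hRR : R * R = S := hSpd.posSemidef.sqrt_mul_self
    have hRH : Rᴴ = R := hSpd.posSemidef.posSemidef_sqrt.1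
    have : Vᴴ * (S * V) = (R * V)ᴴ * (R * V) := by
      rw [Matrix.conjTranspose_mul, hRH, ← hRR]
      simp only [Matrix.mul_assoc]
    rw [this]
    exact Matrix.posSemidef_conjTranspose_mul_self _
  have hMsq : M * M = G := by
    rw [hM, ← hVHV]
    calc (Vᴴ * (S * V)) * (Vᴴ * (S * V))
        = Vᴴ * ((S * (V * Vᴴ) * S) * V) := by
          simp only [Matrix.mul_assoc]
      _ = Vᴴ * V := by rw [hVVH, hSρS, Matrix.one_mul]
  refine ⟨hMpsd, hMsq, ?_⟩
  exact hMpsd.eq_sqrt_of_sq_eq hG (by rw [pow_two, hMsq])
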